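/- Let f be an orientation-preserving C¹ diffeomorphism of the circle S¹ = ℝ/ℤ, let m be the Lebesgue (Haar) measure on S¹, let λ > 0, and let Ξ ⊆ S¹ be a Borel set with m(Ξ) > 0. Suppose that for every closed set K ⊆ Ξ with m(K) > 0 there exist a point ξ ∈ K and an integer i ∈ ℤ such that f^i(ξ) ∈ K and (f^i)'(ξ) = λ. Then for every Borel set A ⊆ Ξ with m(A) > 0 and every ε > 0 there exist a Borel set B ⊆ A with m(B) > 0 and an integer i ∈ ℤ such that f^i(B) ⊆ A and |(f^i)'(x) − λ| < ε for all x ∈ B. -/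

import Mathlib

noncomputable section
open MeasureTheory Filter Topology

/-- A lift of an orientation-preserving `C^∞` circle diffeomorphism: a `C^∞` map
`f : ℝ → ℝ` with `f (x+1) = f x + 1` and everywhere positive derivative. -/
def IsCircleDiffeoLift (f : ℝ → ℝ) : Prop :=
  ContDiff ℝ (⊤ : ℕ∞) f ∧ (∀ x : ℝ, f (x + 1) = f x + 1) ∧ ∀ x : ℝ, 0 < deriv f x

/-- The `C^r` norm `‖φ‖_r = max_{0 ≤ i ≤ r} sup_x |φ^{(i)}(x)|`. -/
def CrNorm (r : ℕ) (φ : ℝ → ℝ) : ℝ :=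
  (Finset.range (r + 1)).sup' (Finset.nonempty_range_iff.mpr r.succ_ne_zero)
    fun i => ⨆ x : ℝ, |iteratedDeriv i φ x|

/-- `d_r(f, g) = max {‖f - g‖_r, ‖f⁻¹ - g⁻¹‖_r}`. -/
def liftDist (r : ℕ) (f g : ℝ → ℝ) : ℝ :=
  max (CrNorm r (fun x => f x - g x))
    (CrNorm r (fun x => Function.invFun f x - Function.invFun g x))

/-- `|f|_r = max {‖f - id‖_r, ‖f⁻¹ - id‖_r, 1}`. -/
def liftNorm (r : ℕ) (f : ℝ → ℝ) : ℝ :=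
  max (max (CrNorm r (fun x => f x - x)) (CrNorm r (fun x => Function.invFun f x - x))) 1

/-- The lift `x ↦ x + a` of the rotation by `a`. -/
def RotLift (a : ℝ) : ℝ → ℝ := fun x => x + a

/-- The rotation number of the circle diffeomorphism induced by the lift `f` equals `a`
(mod 1): the translation number `lim (fⁿ(0) - 0)/n` equals `a + k` for some integer `k`. -/
def HasRotationNumber (f : ℝ → ℝ) (a : ℝ) : Prop :=
  ∃ k : ℤ, Tendsto (fun n : ℕ => f^[n] 0 / (n : ℝ)) atTop (nhds (a + k))

/-- The lift of the `i`-th iterate (`i ∈ ℤ`) of the circle diffeomorphism induced by `f`. -/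
def zpowLift (f : ℝ → ℝ) : ℤ → ℝ → ℝ := fun i =>
  if 0 ≤ i then f^[i.toNat] else (Function.invFun f)^[(-i).toNat]

/-- The ratio set of a circle diffeomorphism, described through the family `Fz i` of its
iterates (`i ∈ ℤ`) and the family `D i` of the derivatives of its iterates: `t ≥ 0` lies in
the ratio set iff for every Borel `A` of positive Haar measure and every `ε > 0` there are a
Borel `B ⊆ A` of positive measure and `i ∈ ℤ` with `Fz i '' B ⊆ A` and `|D i x - t| < ε`
on `B`. -/
def ratioSet (Fz : ℤ → UnitAddCircle → UnitAddCircle) (D : ℤ → UnitAddCircle → ℝ) : Set ℝ :=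
  {t : ℝ | 0 ≤ t ∧ ∀ A : Set UnitAddCircle, MeasurableSet A → 0 < volume A →
    ∀ ε : ℝ, 0 < ε → ∃ B : Set UnitAddCircle, MeasurableSet B ∧ B ⊆ A ∧ 0 < volume B ∧
      ∃ i : ℤ, Fz i '' B ⊆ A ∧ ∀ x ∈ B, |D i x - t| < ε}

/-- A lift of an orientation-preserving `C¹` circle diffeomorphism. -/
def IsC1CircleLift (f : ℝ → ℝ) : Prop :=
  ContDiff ℝ 1 f ∧ (∀ x : ℝ, f (x + 1) = f x + 1) ∧ ∀ x : ℝ, 0 < deriv f x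

/-- If `f` is an orientation-preserving `C¹` circle diffeomorphism (given by a lift), `λ > 0`,
and `Ξ` is a Borel set of positive measure such that every closed `K ⊆ Ξ` of positive measure
contains a point `ξ` with `f^i(ξ) ∈ K` and `(f^i)'(ξ) = λ` for some `i ∈ ℤ`, then for every
Borel `A ⊆ Ξ` of positive measure and every `ε > 0` there are a Borel `B ⊆ A` of positive
measure and `i ∈ ℤ` with `f^i(B) ⊆ A` and `|(f^i)'(x) - λ| < ε` for all `x ∈ B`. -/

private lemma invFun_props_aux (f : ℝ → ℝ)
    (hf : ContDiff ℝ 1 f ∧ (∀ x : ℝ, f (x + 1) = f x + 1) ∧ ∀ x : ℝ, 0 < deriv f x) :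
    ContDiff ℝ 1 (Function.invFun f) ∧ ∀ x, f (Function.invFun f x) = x := by
  obtain ⟨hcd, hper, hpos⟩ := hf
  have hmono : StrictMono f := strictMono_of_deriv_pos hpos
  have hcont : Continuous f := hcd.continuous
  have hnat : ∀ n : ℕ, f n = f 0 + n := by
    intro n; induction n with
    | zero => simp
    | succ k ih => push_cast; rw [hper k, ih]; ring
  have hnegnat : ∀ n : ℕ, f (-(n:ℝ)) = f 0 - n := by
    intro n; induction n with
    | zero => simp
    | succ k ih =>
      have h2 : f (-(k:ℝ) - 1 + 1) = f (-(k:ℝ) - 1) + 1 := hper _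
      have h3 : (-(k:ℝ) - 1 + 1) = -(k:ℝ) := by ring
      rw [h3] at h2
      have : f (-(k:ℝ) - 1) = f (-(k:ℝ)) - 1 := by linarith
      push_cast
      rw [show -((k:ℝ)+1) = -(k:ℝ) - 1 by ring, this, ih]; ring
  have htop : Tendsto f atTop atTop := by
    rw [tendsto_atTop_atTop]
    intro b
    obtain ⟨n, hn⟩ := exists_nat_ge (b - f 0)
    exact ⟨n, fun x hx => by
      have := hmono.monotone hx
      rw [hnat n] at this; linarith⟩
  have hbot : Tendsto f atBot atBot := by
    rw [tendsto_atBot_atBot]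
    intro b
    obtain ⟨n, hn⟩ := exists_nat_ge (f 0 - b)
    exact ⟨-(n:ℝ), fun x hx => by
      have := hmono.monotone hx
      rw [hnegnat n] at this; linarith⟩
  have hsurj : Function.Surjective f := hcont.surjective htop hbot
  have hri : ∀ x, f (Function.invFun f x) = x := fun x => Function.rightInverse_invFun hsurj x
  have hinv_eq : Function.invFun f = (hmono.orderIsoOfSurjective f hsurj).symm := by
    funext x
    apply hmono.injective
    rw [hri]
    have : f ((hmono.orderIsoOfSurjective f hsurj).symm x)
        = (hmono.orderIsoOfSurjective f hsurj) ((hmono.orderIsoOfSurjective f hsurj).symm x) := by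
      rw [StrictMono.coe_orderIsoOfSurjective]
    rw [this, OrderIso.apply_symm_apply]
  have hcontinv : Continuous (Function.invFun f) := by
    rw [hinv_eq]; exact OrderIso.continuous _
  have hder : ∀ x, HasDerivAt (Function.invFun f) (deriv f (Function.invFun f x))⁻¹ x := by
    intro x
    exact HasDerivAt.of_local_left_inverse hcontinv.continuousAt
      ((hcd.differentiable one_ne_zero _).hasDerivAt) (ne_of_gt (hpos _))
      (Eventually.of_forall hri)
  have hderiv_eq : deriv (Function.invFun f) = fun x => (deriv f (Function.invFun f x))⁻¹ :=
    funext fun x => (hder x).deriv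
  refine ⟨contDiff_one_iff_deriv.mpr ⟨fun x => (hder x).differentiableAt, ?_⟩, hri⟩
  rw [hderiv_eq]
  exact (((hcd.continuous_deriv le_rfl).comp hcontinv).inv₀ fun x => ne_of_gt (hpos _))

private lemma iter_contDiff_aux {g : ℝ → ℝ} (hg : ContDiff ℝ 1 g) (n : ℕ) :
    ContDiff ℝ 1 (g^[n]) := by
  induction n with
  | zero => exact contDiff_id
  | succ k ih => rw [Function.iterate_succ']; exact hg.comp ih

private lemma zpow_contDiff_aux (f : ℝ → ℝ) (hf : IsC1CircleLift f) (i : ℤ) :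
    ContDiff ℝ 1 (zpowLift f i) := by
  unfold zpowLift
  split
  · exact iter_contDiff_aux hf.1 _
  · exact iter_contDiff_aux (invFun_props_aux f hf).1 _

theorem stmt_17 (f : ℝ → ℝ) (hf : IsC1CircleLift f)
    (Fz : ℤ → UnitAddCircle → UnitAddCircle) (D : ℤ → UnitAddCircle → ℝ)
    (hFz : ∀ i : ℤ, ∀ x : ℝ, Fz i ↑x = ↑(zpowLift f i x))
    (hD : ∀ i : ℤ, ∀ x : ℝ, D i ↑x = deriv (zpowLift f i) x)
    (lam : ℝ) (hlam : 0 < lam)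
    (Ξ : Set UnitAddCircle) (hΞmeas : MeasurableSet Ξ) (hΞpos : 0 < volume Ξ)
    (hyp : ∀ K : Set UnitAddCircle, K ⊆ Ξ → IsClosed K → 0 < volume K →
      ∃ ξ ∈ K, ∃ i : ℤ, Fz i ξ ∈ K ∧ D i ξ = lam) :
    ∀ A : Set UnitAddCircle, A ⊆ Ξ → MeasurableSet A → 0 < volume A →
      ∀ ε : ℝ, 0 < ε →
        ∃ B : Set UnitAddCircle, MeasurableSet B ∧ B ⊆ A ∧ 0 < volume B ∧
          ∃ i : ℤ, Fz i '' B ⊆ A ∧ ∀ x ∈ B, |D i x - lam| < ε := by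
  intro A hAΞ hAmeas hApos ε hε
  have hcd : ∀ i : ℤ, ContDiff ℝ 1 (zpowLift f i) := zpow_contDiff_aux f hf
  have hFzc : ∀ i : ℤ, Continuous (Fz i) := by
    intro i
    rw [(QuotientAddGroup.isQuotientMap_mk (AddSubgroup.zmultiples (1:ℝ))).continuous_iff]
    have : Fz i ∘ (QuotientAddGroup.mk : ℝ → UnitAddCircle)
        = fun x : ℝ => ((zpowLift f i x : ℝ) : UnitAddCircle) := funext (hFz i)
    rw [this]
    exact (AddCircle.continuous_mk' 1).comp (hcd i).continuous
  have hopen : ∀ i : ℤ, IsOpen {x : UnitAddCircle | |D i x - lam| < ε} := by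
    intro i
    have hSopen : IsOpen {x : ℝ | |deriv (zpowLift f i) x - lam| < ε} :=
      isOpen_Iio.preimage ((((hcd i).continuous_deriv le_rfl).sub continuous_const).abs)
    have heq : {x : UnitAddCircle | |D i x - lam| < ε}
        = (↑) '' {x : ℝ | |deriv (zpowLift f i) x - lam| < ε} := by
      ext y
      constructor
      · intro hy
        obtain ⟨x, rfl⟩ := Quotient.exists_rep y
        exact ⟨x, by rw [Set.mem_setOf_eq, ← hD i x]; exact hy, rfl⟩
      · rintro ⟨x, hx, rfl⟩
        rw [Set.mem_setOf_eq, hD i x]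
        exact hx
    rw [heq]
    exact QuotientAddGroup.isOpenMap_coe _ hSopen
  set C : ℤ → Set UnitAddCircle :=
    fun i => (A ∩ Fz i ⁻¹' A) ∩ {x | |D i x - lam| < ε} with hC
  have hCmeas : ∀ i, MeasurableSet (C i) :=
    fun i => (hAmeas.inter ((hFzc i).measurable hAmeas)).inter (hopen i).measurableSet
  by_cases hposC : ∃ i, 0 < volume (C i)
  · obtain ⟨i, hi⟩ := hposC
    refine ⟨C i, hCmeas i, fun x hx => hx.1.1, hi, i, ?_, fun x hx => hx.2⟩
    rintro _ ⟨x, hx, rfl⟩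
    exact hx.1.2
  · push_neg at hposC
    have hnull : ∀ i : ℤ, volume (C i) = 0 := fun i => le_antisymm (hposC i) zero_le
    have hNnull : volume (⋃ i : ℤ, C i) = 0 := measure_iUnion_null hnull
    set N := toMeasurable volume (⋃ i : ℤ, C i) with hN
    have hNmeas : MeasurableSet N := measurableSet_toMeasurable volume _
    have hNnull' : volume N = 0 := by rw [hN, measure_toMeasurable]; exact hNnull
    have hAN : volume (A \ N) = volume A := measure_diff_null hNnull'
    obtain ⟨K, hKsub, hKcomp, hKpos⟩ :=
      (hAmeas.diff hNmeas).exists_lt_isCompact (by rw [hAN]; exact hApos)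
    obtain ⟨ξ, hξK, i, hFξ, hDξ⟩ :=
      hyp K (fun x hx => hAΞ (hKsub hx).1) hKcomp.isClosed hKpos
    exfalso
    have hξC : ξ ∈ C i :=
      ⟨⟨(hKsub hξK).1, (hKsub hFξ).1⟩, by rw [Set.mem_setOf_eq, hDξ]; simpa using hε⟩
    exact (hKsub hξK).2 (subset_toMeasurable _ _ (Set.mem_iUnion.mpr ⟨i, hξC⟩))
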